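/- Assume the residue-set setting with an admissible subset P ⊆ T_1. Let i_1, i_2 ∈ P with K_{i_1} ∩ K_{i_2} ≠ ∅. Then for every j ∈ K_{i_1} ∖ K_{i_2} there exists i_3 ∈ P ∖ {i_1, i_2} such that j ∈ K_{i_3} and K_{i_2} ∩ K_{i_3} = ∅. -/

import Mathlib

open Set

/-- Distributivity of gcd over lcm, dvd direction. -/
lemma gcd_lcm_dvd_aux (x y c : ℕ) (hx : x ≠ 0) (hy : y ≠ 0) (hc : c ≠ 0) :
    Nat.gcd (Nat.lcm x y) c ∣ Nat.lcm (Nat.gcd x c) (Nat.gcd y c) := by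
  have hlcm : Nat.lcm x y ≠ 0 := Nat.lcm_ne_zero hx hy
  have hg1 : Nat.gcd x c ≠ 0 := fun h => hx (Nat.eq_zero_of_gcd_eq_zero_left h)
  have hg2 : Nat.gcd y c ≠ 0 := fun h => hy (Nat.eq_zero_of_gcd_eq_zero_left h)
  have hL : Nat.gcd (Nat.lcm x y) c ≠ 0 := fun h => hlcm (Nat.eq_zero_of_gcd_eq_zero_left h)
  have hR : Nat.lcm (Nat.gcd x c) (Nat.gcd y c) ≠ 0 := Nat.lcm_ne_zero hg1 hg2
  rw [← Nat.factorization_le_iff_dvd hL hR, Nat.factorization_gcd hlcm hc,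
    Nat.factorization_lcm hx hy, Nat.factorization_lcm hg1 hg2,
    Nat.factorization_gcd hx hc, Nat.factorization_gcd hy hc, Finsupp.le_def]
  intro p
  simp only [Finsupp.inf_apply, Finsupp.sup_apply]
  exact le_of_eq (min_max_distrib_right _ _ _)

/-- If each `gcd (d i) c` divides `z`, so does `gcd (S.lcm d) c`. -/
lemma gcd_finset_lcm_dvd {T : Type*} [DecidableEq T] (S : Finset T) (d : T → ℕ) (c : ℕ)
    (hd : ∀ i, d i ≠ 0) (hc : c ≠ 0) (z : ℤ)
    (h : ∀ i ∈ S, ((Nat.gcd (d i) c : ℕ) : ℤ) ∣ z) :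
    ((Nat.gcd (S.lcm d) c : ℕ) : ℤ) ∣ z := by
  induction S using Finset.induction with
  | empty => simp
  | @insert i S hiS ih =>
    have hSl : S.lcm d ≠ 0 := by
      simp only [Ne, Finset.lcm_eq_zero_iff, Set.mem_image]
      rintro ⟨x, -, hx⟩
      exact hd x hx
    have hstep : Nat.gcd (Nat.lcm (d i) (S.lcm d)) c ∣
        Nat.lcm (Nat.gcd (d i) c) (Nat.gcd (S.lcm d) c) :=
      gcd_lcm_dvd_aux _ _ _ (hd i) hSl hc
    have h1 : ((Nat.gcd (d i) c : ℕ) : ℤ) ∣ z := h i (Finset.mem_insert_self i S)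
    have h2 : ((Nat.gcd (S.lcm d) c : ℕ) : ℤ) ∣ z :=
      ih (fun k hk => h k (Finset.mem_insert_of_mem hk))
    have hlz : ((Nat.lcm (Nat.gcd (d i) c) (Nat.gcd (S.lcm d) c) : ℕ) : ℤ) ∣ z := by
      have := Int.coe_lcm_dvd_iff.mpr ⟨h1, h2⟩
      simpa [Int.lcm, Int.natAbs_natCast] using this
    have : (insert i S).lcm d = Nat.lcm (d i) (S.lcm d) := by
      rw [Finset.lcm_insert]; rfl
    rw [this]
    exact dvd_trans (Int.natCast_dvd_natCast.mpr hstep) hlz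

/-- The set of residues `{n ∈ {0,…,D−1} : n ≡ a (mod d)}`. -/
def resK (D d a : ℕ) : Set ℕ := {n | n < D ∧ n % d = a}

/-- `R_j ∩ P = {i ∈ P : j ∈ K i}`. -/
def resR {T : Type*} (P : Set T) (K : T → Set ℕ) (j : ℕ) : Set T := {i ∈ P | j ∈ K i}

/-- Admissibility of `P ⊆ T₁` in the residue-set setting: `P` is nonempty,
`∪_{i∉P} K_i ⊆ ∪_{i∈P} K_i`, and `R_{j'} ∩ P ⊆ R_j ∩ P` implies
`R_{j'} ∩ P = R_j ∩ P` for all `j, j' ∈ {0,…,D−1}`. -/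
def ResAdmissible {T : Type*} (D : ℕ) (K : T → Set ℕ) (P : Set T) : Prop :=
  P.Nonempty ∧ (⋃ i ∈ Pᶜ, K i) ⊆ (⋃ i ∈ P, K i) ∧
    ∀ j j' : ℕ, j < D → j' < D → resR P K j' ⊆ resR P K j → resR P K j' = resR P K j

/-- in the residue-set setting with admissible `P`, if `i₁, i₂ ∈ P` with
`K_{i₁} ∩ K_{i₂} ≠ ∅`, then for every `j ∈ K_{i₁} ∖ K_{i₂}` there is
`i₃ ∈ P ∖ {i₁, i₂}` with `j ∈ K_{i₃}` and `K_{i₂} ∩ K_{i₃} = ∅`. -/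
theorem statement8 {T : Type*} [Fintype T] (D : ℕ) (hD : 0 < D)
    (d a : T → ℕ) (hdvd : ∀ i, d i ∣ D) (hd : ∀ i, 0 < d i) (ha : ∀ i, a i < d i)
    (P : Set T) (hP : ResAdmissible D (fun i => resK D (d i) (a i)) P)
    (i₁ i₂ : T) (h1 : i₁ ∈ P) (h2 : i₂ ∈ P)
    (hint : (resK D (d i₁) (a i₁) ∩ resK D (d i₂) (a i₂)).Nonempty)
    (j : ℕ) (hj : j ∈ resK D (d i₁) (a i₁) \ resK D (d i₂) (a i₂)) :
    ∃ i₃ ∈ P, i₃ ≠ i₁ ∧ i₃ ≠ i₂ ∧ j ∈ resK D (d i₃) (a i₃) ∧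
      resK D (d i₂) (a i₂) ∩ resK D (d i₃) (a i₃) = ∅ := by
  classical
  set K : T → Set ℕ := fun i => resK D (d i) (a i) with hK
  by_contra hcon
  push_neg at hcon
  -- every i ∈ P with j ∈ K i meets K i₂
  have key : ∀ i ∈ P, j ∈ K i → (K i₂ ∩ K i).Nonempty := by
    intro i hiP hji
    by_cases hi1 : i = i₁
    · subst hi1
      obtain ⟨x, hx1, hx2⟩ := hint
      exact ⟨x, hx2, hx1⟩
    by_cases hi2 : i = i₂
    · subst hi2; exact ⟨j, hji, hji⟩
    · exact hcon i hiP hi1 hi2 hji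
  have hjD : j < D := hj.1.1
  have hja : j % d i₁ = a i₁ := hj.1.2
  -- compatibility: gcd (d i) (d i₂) divides a i₂ - j for every charged i
  have compat : ∀ i ∈ P, j ∈ K i → ((Nat.gcd (d i) (d i₂) : ℕ) : ℤ) ∣ (a i₂ : ℤ) - j := by
    intro i hiP hji
    obtain ⟨x, hx2, hxi⟩ := key i hiP hji
    have hdi : j ≡ x [MOD d i] := by
      show j % d i = x % d i
      rw [hji.2, hxi.2]
    have hd2 : x ≡ a i₂ [MOD d i₂] := by
      show x % d i₂ = a i₂ % d i₂
      rw [hx2.2, Nat.mod_eq_of_lt (ha i₂)]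
    have hjx : j ≡ x [MOD Nat.gcd (d i) (d i₂)] := hdi.of_dvd (Nat.gcd_dvd_left _ _)
    have hxa : x ≡ a i₂ [MOD Nat.gcd (d i) (d i₂)] := hd2.of_dvd (Nat.gcd_dvd_right _ _)
    exact (Nat.modEq_iff_dvd).mp (hjx.trans hxa)
  -- the finset of charged spokes
  set S : Finset T := Finset.univ.filter (fun i => i ∈ P ∧ j ∈ K i) with hS
  set M : ℕ := S.lcm d with hM
  have hMdvd : M ∣ D := Finset.lcm_dvd (fun i _ => hdvd i)
  -- gcd M (d i₂) divides a i₂ - j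
  have hgcd : ((Nat.gcd M (d i₂) : ℕ) : ℤ) ∣ (a i₂ : ℤ) - j := by
    apply gcd_finset_lcm_dvd S d (d i₂) (fun i => (hd i).ne') (hd i₂).ne'
    intro i hi
    rw [hS, Finset.mem_filter] at hi
    exact compat i hi.2.1 hi.2.2
  have hcompat : j ≡ a i₂ [MOD Nat.gcd M (d i₂)] := (Nat.modEq_iff_dvd).mpr hgcd
  obtain ⟨n, hn1, hn2⟩ := Nat.chineseRemainder' hcompat
  -- reduce mod D
  set n' : ℕ := n % D with hn'
  have hn'D : n' < D := Nat.mod_lt _ hD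
  have hn'n : ∀ m : ℕ, m ∣ D → n' % m = n % m := by
    intro m hm
    rw [hn', Nat.mod_mod_of_dvd _ hm]
  -- n' ∈ K i₂
  have hn'2 : n' ∈ K i₂ := by
    refine ⟨hn'D, ?_⟩
    rw [hn'n _ (hdvd i₂)]
    have := hn2
    unfold Nat.ModEq at this
    rw [this, Nat.mod_eq_of_lt (ha i₂)]
  -- n' ∈ K i for every charged i
  have hn'K : ∀ i ∈ P, j ∈ K i → n' ∈ K i := by
    intro i hiP hji
    have hiS : i ∈ S := by
      rw [hS, Finset.mem_filter]; exact ⟨Finset.mem_univ _, hiP, hji⟩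
    have hdiM : d i ∣ M := Finset.dvd_lcm hiS
    refine ⟨hn'D, ?_⟩
    rw [hn'n _ (hdvd i)]
    have h1 : n ≡ j [MOD d i] := hn1.of_dvd hdiM
    unfold Nat.ModEq at h1
    rw [h1, hji.2]
  -- R_j ⊆ R_{n'}, apply admissibility
  have hsub : resR P K j ⊆ resR P K n' := by
    rintro i ⟨hiP, hji⟩
    exact ⟨hiP, hn'K i hiP hji⟩
  have heq : resR P K j = resR P K n' := hP.2.2 n' j hn'D hjD hsub
  have : i₂ ∈ resR P K n' := ⟨h2, hn'2⟩
  rw [← heq] at this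
  exact hj.2 this.2
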